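/- Let M ≥ 1 and let u_1, …, u_M be real numbers with ∑_{m=1}^{M} u_m < 0. Then there exists σ_0 > 0 such that for all σ ≥ σ_0: (1/M)·∑_{m=1}^{M} Φ(u_m/σ) ≤ 1/2 + (∑_{m=1}^{M} u_m)/(4Mσ). -/

import Mathlib

open MeasureTheory

/-- The standard normal CDF `Φ(x) = ∫_{-∞}^{x} e^{-t²/2}/√(2π) dt`. -/
noncomputable def stdGaussianCDF (x : ℝ) : ℝ :=
  (∫ t in Set.Iic x, Real.exp (-(t ^ 2) / 2)) / Real.sqrt (2 * Real.pi)

lemma gauss_integrable : Integrable (fun t : ℝ => Real.exp (-(t ^ 2) / 2)) := by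
  have := integrable_exp_neg_mul_sq (show (0:ℝ) < 1/2 by norm_num)
  convert this using 2 with t
  ring_nf

lemma gauss_Iic_zero :
    (∫ t in Set.Iic (0:ℝ), Real.exp (-(t ^ 2) / 2)) = Real.sqrt (2 * Real.pi) / 2 := by
  have hint := gauss_integrable
  have hsym : (∫ t in Set.Iic (0:ℝ), Real.exp (-(t ^ 2) / 2))
      = ∫ t in Set.Ioi (0:ℝ), Real.exp (-(t ^ 2) / 2) := by
    have := integral_comp_neg_Iic (0:ℝ) (fun t => Real.exp (-(t ^ 2) / 2))
    simpa using this
  have htot : (∫ t : ℝ, Real.exp (-(t ^ 2) / 2)) = Real.sqrt (2 * Real.pi) := by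
    have := integral_gaussian (1/2 : ℝ)
    have h2 : (∫ t : ℝ, Real.exp (-(t ^ 2) / 2)) = ∫ t : ℝ, Real.exp (-(1/2:ℝ) * t ^ 2) := by
      congr 1; funext t; ring_nf
    rw [h2, this, show Real.pi / (1/2) = 2 * Real.pi by ring]
  have hsplit : (∫ t in Set.Iic (0:ℝ), Real.exp (-(t ^ 2) / 2))
      + (∫ t in Set.Ioi (0:ℝ), Real.exp (-(t ^ 2) / 2))
      = ∫ t : ℝ, Real.exp (-(t ^ 2) / 2) :=
    intervalIntegral.integral_Iic_add_Ioi hint.integrableOn hint.integrableOn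
  linarith [hsym, hsplit, htot]

lemma gauss_interval_le (x : ℝ) :
    (∫ t in (0:ℝ)..x, Real.exp (-(t ^ 2) / 2)) ≤ x + |x| ^ 3 / 2 := by
  have hint : ∀ a b : ℝ, IntervalIntegrable (fun t : ℝ => Real.exp (-(t ^ 2) / 2)) volume a b :=
    fun a b => gauss_integrable.intervalIntegrable
  have hsplit : (∫ t in (0:ℝ)..x, Real.exp (-(t ^ 2) / 2))
      = x + ∫ t in (0:ℝ)..x, (Real.exp (-(t ^ 2) / 2) - 1) := by
    rw [intervalIntegral.integral_sub (hint 0 x) intervalIntegrable_const]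
    simp
  rw [hsplit]
  have hbound : ‖∫ t in (0:ℝ)..x, (Real.exp (-(t ^ 2) / 2) - 1)‖ ≤ x ^ 2 / 2 * |x - 0| := by
    apply intervalIntegral.norm_integral_le_of_norm_le_const
    intro t ht
    have ht' : |t| ≤ |x| := by
      rcases Set.mem_uIoc.mp ht with h | h
      · rw [abs_of_pos h.1, abs_of_pos (lt_of_lt_of_le h.1 h.2)]; exact h.2
      · rw [abs_of_nonpos h.2, abs_of_neg (lt_of_lt_of_le h.1 h.2)]
        exact neg_le_neg (le_of_lt h.1)
    have h1 : Real.exp (-(t ^ 2) / 2) ≤ 1 := by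
      rw [Real.exp_le_one_iff]
      nlinarith [sq_nonneg t]
    have h2 : 1 - t ^ 2 / 2 ≤ Real.exp (-(t ^ 2) / 2) := by
      have := Real.add_one_le_exp (-(t ^ 2) / 2)
      linarith
    have ht2 : t ^ 2 ≤ x ^ 2 := by
      have := sq_abs t; have := sq_abs x
      nlinarith [abs_nonneg t]
    rw [Real.norm_eq_abs, abs_le]
    constructor <;> nlinarith
  rw [Real.norm_eq_abs, abs_le] at hbound
  have : |x| ^ 3 = x ^ 2 * |x| := by
    rw [← sq_abs x]; ring
  have hb := hbound.2
  simp only [sub_zero] at hb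
  nlinarith [abs_nonneg x]

lemma stdGaussianCDF_le (x : ℝ) :
    stdGaussianCDF x ≤ 1 / 2 + (x + |x| ^ 3 / 2) / Real.sqrt (2 * Real.pi) := by
  have hc : (0:ℝ) < Real.sqrt (2 * Real.pi) :=
    Real.sqrt_pos.mpr (by positivity)
  have hIic : (∫ t in Set.Iic x, Real.exp (-(t ^ 2) / 2))
      = Real.sqrt (2 * Real.pi) / 2 + ∫ t in (0:ℝ)..x, Real.exp (-(t ^ 2) / 2) := by
    have := intervalIntegral.integral_Iic_sub_Iic (μ := volume)
      (f := fun t : ℝ => Real.exp (-(t ^ 2) / 2)) (a := (0:ℝ)) (b := x)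
      gauss_integrable.integrableOn gauss_integrable.integrableOn
    rw [gauss_Iic_zero] at this
    linarith
  rw [stdGaussianCDF, hIic, add_div]
  have hhalf : Real.sqrt (2 * Real.pi) / 2 / Real.sqrt (2 * Real.pi) = 1 / 2 := by
    field_simp
  rw [hhalf]
  gcongr
  exact gauss_interval_le x

/-- If `∑ u_m < 0`, then there is `σ₀ > 0` such that for all `σ ≥ σ₀`,
`(1/M) ∑ Φ(u_m/σ) ≤ 1/2 + (∑ u_m)/(4Mσ)`. -/
theorem stmt_5 (M : ℕ) (hM : 1 ≤ M) (u : Fin M → ℝ) (hsum : ∑ m, u m < 0) :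
    ∃ σ₀ > (0 : ℝ), ∀ σ ≥ σ₀,
      (1 / M) * ∑ m, stdGaussianCDF (u m / σ) ≤ 1 / 2 + (∑ m, u m) / (4 * M * σ) := by
  set S := ∑ m, u m with hS
  set E := ∑ m, |u m| ^ 3 with hE
  set c := Real.sqrt (2 * Real.pi) with hcdef
  have hc : (0:ℝ) < c := Real.sqrt_pos.mpr (by positivity)
  have hc4 : c < 4 := by
    rw [hcdef]
    rw [show (4:ℝ) = Real.sqrt 16 by
      rw [show (16:ℝ) = 4 ^ 2 by norm_num, Real.sqrt_sq]; norm_num]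
    apply Real.sqrt_lt_sqrt (by positivity)
    nlinarith [Real.pi_lt_d2]
  have hE0 : 0 ≤ E := Finset.sum_nonneg fun m _ => by positivity
  set δ : ℝ := (-S) * (1/c - 1/4) with hδdef
  have hδ : 0 < δ := by
    apply mul_pos (by linarith)
    have : 1/4 < 1/c := by
      apply one_div_lt_one_div_of_lt hc hc4
    linarith
  refine ⟨max 1 (Real.sqrt (E / (2 * c * δ))), lt_of_lt_of_le one_pos (le_max_left _ _), ?_⟩
  intro σ hσ
  have hσ1 : (1:ℝ) ≤ σ := le_trans (le_max_left _ _) hσ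
  have hσ0 : (0:ℝ) < σ := lt_of_lt_of_le one_pos hσ1
  have hσ2 : E / (2 * c * δ) ≤ σ ^ 2 := by
    have h1 : Real.sqrt (E / (2 * c * δ)) ≤ σ := le_trans (le_max_right _ _) hσ
    have h2 : (0:ℝ) ≤ E / (2 * c * δ) := by positivity
    calc E / (2 * c * δ) = Real.sqrt (E / (2 * c * δ)) ^ 2 := (Real.sq_sqrt h2).symm
      _ ≤ σ ^ 2 := by nlinarith [Real.sqrt_nonneg (E / (2 * c * δ))]
  have hM0 : (0:ℝ) < (M:ℝ) := by exact_mod_cast hM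
  -- bound the sum
  have hsum_le : ∑ m, stdGaussianCDF (u m / σ) ≤ M / 2 + (S / σ + E / (2 * σ ^ 3)) / c := by
    have h1 : ∑ m, stdGaussianCDF (u m / σ)
        ≤ ∑ m, (1/2 + (u m / σ + |u m / σ| ^ 3 / 2) / c) :=
      Finset.sum_le_sum fun m _ => stdGaussianCDF_le (u m / σ)
    have h2 : ∑ m, (1/2 + (u m / σ + |u m / σ| ^ 3 / 2) / c)
        = (M:ℝ) / 2 + (S / σ + E / (2 * σ ^ 3)) / c := by
      rw [Finset.sum_add_distrib, Finset.sum_const, ← Finset.sum_div]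
      congr 1
      · simp; ring
      · congr 1
        rw [hS, hE, Finset.sum_div, Finset.sum_div, ← Finset.sum_add_distrib]
        apply Finset.sum_congr rfl
        intro m _
        rw [abs_div, abs_of_pos hσ0, div_pow]
        ring
    linarith
  -- key scalar inequality: (S/σ + E/(2σ³))/c ≤ S/(4σ)
  have hkey : (S / σ + E / (2 * σ ^ 3)) / c ≤ S / (4 * σ) := by
    rw [div_le_div_iff₀ hc (by positivity)]
    have hEle : E ≤ 2 * c * δ * σ ^ 2 := by
      rw [div_le_iff₀ (by positivity)] at hσ2
      linarith
    have hδ' : δ = -S/c + S/4 := by rw [hδdef]; ring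
    have expand : (S / σ + E / (2 * σ ^ 3)) * (4 * σ)
        = 4 * S + 2 * E / σ ^ 2 := by
      field_simp; ring
    have h2 : 2 * E / σ ^ 2 ≤ 4 * c * δ := by
      rw [div_le_iff₀ (by positivity)]
      nlinarith
    have h3 : 4 * c * δ = -4*S + S*c := by rw [hδ']; field_simp
    nlinarith
  calc (1 / M) * ∑ m, stdGaussianCDF (u m / σ)
      ≤ (1 / M) * ((M:ℝ) / 2 + (S / σ + E / (2 * σ ^ 3)) / c) := by
        apply mul_le_mul_of_nonneg_left hsum_le (by positivity)
    _ ≤ (1 / M) * ((M:ℝ) / 2 + S / (4 * σ)) := by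
        apply mul_le_mul_of_nonneg_left _ (by positivity)
        linarith
    _ = 1 / 2 + S / (4 * M * σ) := by
        field_simp
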